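/- Realizability of pairs in S: for every pair (q₁,q₂) in the fixpoint S of the pair-coverability operator, there exist k ≥ 2, a line topology with vertices v₁,…,v_k, and an execution from the initial configuration reaching a configuration in which v₁ is in state q₁ and v₂ is in state q₂. -/

import Mathlib

namespace BN

/-- Actions of a broadcast protocol: broadcast `!!m`, reception `?m`, internal `τ`. -/
inductive Act (M : Type) : Type where
  | brd : M → Act M
  | rcv : M → Act M
  | tau : Act M

/-- A broadcast protocol: an initial state and a set of transitions. -/
structure Protocol (Q M : Type) : Type where
  qin : Q
  delta : Set (Q × Act M × Q)

variable {Q M V : Type}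

/-- `q` has an outgoing reception of `m`. -/
def canRecv (P : Protocol Q M) (q : Q) (m : M) : Prop :=
  ∃ q', (q, Act.rcv m, q') ∈ P.delta

/-- One step of the broadcast network semantics over topology `G`,
performed by vertex `v` taking transition `t`. -/
def Step (G : SimpleGraph V) (P : Protocol Q M) (v : V)
    (t : Q × Act M × Q) (L L' : V → Q) : Prop :=
  t ∈ P.delta ∧ L v = t.1 ∧ L' v = t.2.2 ∧
  (match t.2.1 with
   | Act.tau => ∀ u, u ≠ v → L' u = L u
   | Act.brd m =>
       (∀ u, G.Adj v u →
          ((L u, Act.rcv m, L' u) ∈ P.delta ∨ (¬ canRecv P (L u) m ∧ L' u = L u))) ∧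
       (∀ u, u ≠ v → ¬ G.Adj v u → L' u = L u)
   | Act.rcv _ => False)

def StepAny (G : SimpleGraph V) (P : Protocol Q M) (L L' : V → Q) : Prop :=
  ∃ v t, Step G P v t L L'

def Reach (G : SimpleGraph V) (P : Protocol Q M) : (V → Q) → (V → Q) → Prop :=
  Relation.ReflTransGen (StepAny G P)

def initConf (P : Protocol Q M) : V → Q := fun _ => P.qin

/-- `qf` is coverable over the class of all (finite) graph topologies. -/
def Coverable (P : Protocol Q M) (qf : Q) : Prop :=
  ∃ (V' : Type) (_ : Fintype V') (G : SimpleGraph V') (L : V' → Q),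
    Reach G P (initConf P) L ∧ ∃ v, L v = qf

/-- A tree topology: a prefix-closed finite set of words over ℕ containing ε. -/
structure TreeTopo : Type where
  verts : Finset (List ℕ)
  nil_mem : ([] : List ℕ) ∈ verts
  prefixClosed : ∀ w ∈ verts, ∀ w' : List ℕ, w' <+: w → w' ∈ verts

abbrev TreeTopo.Vert (T : TreeTopo) : Type := {w : List ℕ // w ∈ T.verts}

def TreeTopo.root (T : TreeTopo) : T.Vert := ⟨[], T.nil_mem⟩

/-- The graph of a tree topology: each word `w ++ [x]` is adjacent to its parent `w`. -/
def TreeTopo.graph (T : TreeTopo) : SimpleGraph T.Vert where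
  Adj u v := (∃ x : ℕ, (v : List ℕ) = (u : List ℕ) ++ [x]) ∨
             (∃ x : ℕ, (u : List ℕ) = (v : List ℕ) ++ [x])
  symm := by constructor; intro u v h; exact Or.symm h
  loopless := by
    constructor; intro u h
    rcases h with ⟨x, hx⟩ | ⟨x, hx⟩ <;> simpa using congrArg List.length hx

def CoverableWith (T : TreeTopo) (P : Protocol Q M) (qf : Q) : Prop :=
  ∃ L : T.Vert → Q, Reach T.graph P (initConf P) L ∧ ∃ u, L u = qf

def CoverableTreeRoot (P : Protocol Q M) (qf : Q) : Prop :=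
  ∃ (T : TreeTopo) (L : T.Vert → Q),
    Reach T.graph P (initConf P) L ∧ L T.root = qf

/-- `(T, lam)` is the unfolding of graph `G` at vertex `v` to depth `n`. -/
structure IsUnfolding {V : Type} (G : SimpleGraph V) (v : V) (n : ℕ)
    (T : TreeTopo) (lam : T.Vert → V) : Prop where
  root_lbl : lam T.root = v
  depth_le : ∀ w ∈ T.verts, w.length ≤ n
  root_children :
    Set.BijOn lam {u : T.Vert | ∃ x : ℕ, (u : List ℕ) = [x]} (G.neighborSet v)
  children : ∀ (u : T.Vert) (w : List ℕ) (hw : w ∈ T.verts) (x : ℕ),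
      (u : List ℕ) = w ++ [x] → (u : List ℕ).length < n →
      Set.BijOn lam {u' : T.Vert | ∃ y : ℕ, (u' : List ℕ) = (u : List ℕ) ++ [y]}
        (G.neighborSet (lam u) \ {lam ⟨w, hw⟩})
  no_deep : ∀ u : T.Vert, n ≤ (u : List ℕ).length →
      ∀ x : ℕ, (u : List ℕ) ++ [x] ∉ T.verts

/-- Phase tags annotating states: `zero` (phase 0), broadcast phase `j`, reception phase `j`. -/
inductive PTag : Type where
  | zero : PTag
  | bph : ℕ → PTag
  | rph : ℕ → PTag
deriving DecidableEq

def bOf : ℕ → PTag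
  | 0 => .zero
  | j+1 => .bph (j+1)

def rOf : ℕ → PTag
  | 0 => .zero
  | j+1 => .rph (j+1)

/-- `φ` witnesses that `P` is `k`-phase-bounded. -/
def IsPhaseAssignment (k : ℕ) (P : Protocol Q M) (φ : Q → PTag) : Prop :=
  φ P.qin = .zero ∧
  (∀ q : Q, φ q = .zero ∨ ∃ j, 1 ≤ j ∧ j ≤ k ∧ (φ q = .bph j ∨ φ q = .rph j)) ∧
  ∀ t ∈ P.delta,
    (match t.2.1 with
     | Act.tau => φ t.1 = φ t.2.2
     | Act.brd _ =>
         (∃ j, 1 ≤ j ∧ j ≤ k ∧ φ t.1 = .bph j ∧ φ t.2.2 = .bph j) ∨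
         (∃ i, i < k ∧ φ t.1 = rOf i ∧ φ t.2.2 = .bph (i+1))
     | Act.rcv _ =>
         (∃ j, 1 ≤ j ∧ j ≤ k ∧ φ t.1 = .rph j ∧ φ t.2.2 = .rph j) ∨
         (∃ i, i < k ∧ φ t.1 = bOf i ∧ φ t.2.2 = .rph (i+1)) ∨
         (1 ≤ k ∧ φ t.1 = .bph k ∧ φ t.2.2 = .rph k))

def IsPhaseBounded (k : ℕ) (P : Protocol Q M) : Prop :=
  ∃ φ : Q → PTag, IsPhaseAssignment k P φ

/-- The `k`-unfolding `Pₖ` of a protocol `P`. -/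
def unfoldP (P : Protocol Q M) (k : ℕ) : Protocol (Q × PTag) M where
  qin := (P.qin, .zero)
  delta :=
    {t | ∃ q p, (q, Act.tau, p) ∈ P.delta ∧ t = ((q, .zero), Act.tau, (p, .zero))} ∪
    {t | ∃ q p α j, 1 ≤ j ∧ j ≤ k ∧ (q, α, p) ∈ P.delta ∧
        (α = Act.tau ∨ ∃ m, α = Act.rcv m) ∧ t = ((q, .rph j), α, (p, .rph j))} ∪
    {t | ∃ q p α j, 1 ≤ j ∧ j ≤ k ∧ (q, α, p) ∈ P.delta ∧
        (α = Act.tau ∨ ∃ m, α = Act.brd m) ∧ t = ((q, .bph j), α, (p, .bph j))} ∪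
    {t | ∃ q p m j, j < k ∧ (q, Act.brd m, p) ∈ P.delta ∧
        t = ((q, rOf j), Act.brd m, (p, .bph (j+1)))} ∪
    {t | ∃ q p m j, j < k ∧ (q, Act.rcv m, p) ∈ P.delta ∧
        t = ((q, bOf j), Act.rcv m, (p, .rph (j+1)))} ∪
    {t | ∃ q p m, 1 ≤ k ∧ (q, Act.rcv m, p) ∈ P.delta ∧
        t = ((q, .bph k), Act.rcv m, (p, .rph k))}

/-- Star topology: root `none` adjacent to every leaf `some i`, no other edges. -/
def starGraph (ι : Type) : SimpleGraph (Option ι) where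
  Adj u v := (u = none ∧ v ≠ none) ∨ (v = none ∧ u ≠ none)
  symm := by constructor; intro u v h; tauto
  loopless := by constructor; intro u h; tauto

/-- For a 1-phase-bounded protocol with witness `φ`, `Q^b = Q₀ ∪ Q₁^b`. -/
def Qb (φ : Q → PTag) : Set Q := {q | φ q = .zero ∨ φ q = .bph 1}

/-- The set component of the broadcast-print of a star configuration. -/
def bprintSet {ι : Type} (φ : Q → PTag) (L : Option ι → Q) : Set Q :=
  {q | q ∈ Qb φ ∧ ∃ i, L (some i) = q}

/-- The abstract transition relation `⇒` on broadcast-prints. -/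
def PrintStep (P : Protocol Q M) (φ : Q → PTag) :
    (Q × Set Q) → (Q × Set Q) → Prop := fun pr pr' =>
  ∃ (ι : Type) (_ : Fintype ι) (L L' : Option ι → Q),
    StepAny (starGraph ι) P L L' ∧ L none ∈ Qb φ ∧ L' none ∈ Qb φ ∧
    pr = (L none, bprintSet φ L) ∧ pr' = (L' none, bprintSet φ L')

/-- Line topology on `Fin ℓ`: consecutive vertices are adjacent. -/
def lineGraph (ℓ : ℕ) : SimpleGraph (Fin ℓ) where
  Adj i j := (i : ℕ) + 1 = (j : ℕ) ∨ (j : ℕ) + 1 = (i : ℕ)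
  symm := by constructor; intro i j h; tauto
  loopless := by constructor; intro i h; rcases h with h | h <;> omega

/-- `t` is a broadcast transition. -/
def IsBrdT (t : Q × Act M × Q) : Prop := ∃ m, t.2.1 = Act.brd m

/-- In the execution described by `vs, ts` of length `n`, `i` is the first index at
which vertex `u` performs a broadcast. -/
def IsFirstBrd {V' : Type} (vs : ℕ → V') (ts : ℕ → Q × Act M × Q) (n : ℕ)
    (u : V') (i : ℕ) : Prop :=
  i < n ∧ vs i = u ∧ IsBrdT (ts i) ∧ ∀ j < i, vs j = u → ¬ IsBrdT (ts j)

/-- Every transition of `u` occurs no later than every broadcast of `w`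
(i.e. lastBroadcast(u) ≤ firstBroadcast(w)). -/
def BrdOrder {V' : Type} (n : ℕ) (vs : ℕ → V') (ts : ℕ → Q × Act M × Q)
    (u w : V') : Prop :=
  ∀ j j', j < n → j' < n → vs j = u → vs j' = w → IsBrdT (ts j') → j ≤ j'

/-- One application of the pair-coverability operator. -/
def pairStep (P : Protocol Q M) (S : Set (Q × Q)) : Set (Q × Q) :=
  S ∪
  {p | ∃ p₁, (p₁, p.2) ∈ S ∧ (p₁, Act.tau, p.1) ∈ P.delta} ∪
  {p | ∃ p₂, (p.1, p₂) ∈ S ∧ (p₂, Act.tau, p.2) ∈ P.delta} ∪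
  {p | ∃ p₁ p₂ m, (p₁, p₂) ∈ S ∧ (p₂, Act.brd m, p.2) ∈ P.delta ∧
      (p₁, Act.rcv m, p.1) ∈ P.delta} ∪
  {p | ∃ p₂ m, (p.1, p₂) ∈ S ∧ (p₂, Act.brd m, p.2) ∈ P.delta ∧ ¬ canRecv P p.1 m} ∪
  {p | p.1 = P.qin ∧ ∃ q', (p.2, q') ∈ S}

/-- The iteration `S₀ ⊆ S₁ ⊆ …` of the pair-coverability operator. -/
def Siter (P : Protocol Q M) : ℕ → Set (Q × Q)
  | 0 => {(P.qin, P.qin)}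
  | i+1 => pairStep P (Siter P i)


section Realizable

open Classical in
/-- Pick a reception successor if one exists, else stay. -/
noncomputable def recvUpd (P : Protocol Q M) (m : M) (q : Q) : Q :=
  if h : canRecv P q m then h.choose else q

lemma recvUpd_spec (P : Protocol Q M) (m : M) (q : Q) :
    (q, Act.rcv m, recvUpd P m q) ∈ P.delta ∨
      (¬ canRecv P q m ∧ recvUpd P m q = q) := by
  unfold recvUpd
  split
  · next h => exact Or.inl h.choose_spec
  · next h => exact Or.inr ⟨h, rfl⟩

/-- A step on a line in which vertex 0 does not broadcast. -/
def StepNB (P : Protocol Q M) {ℓ : ℕ} (L L' : Fin ℓ → Q) : Prop :=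
  ∃ v t, Step (lineGraph ℓ) P v t L L' ∧ (IsBrdT t → (v : ℕ) ≠ 0)

def ReachNB (P : Protocol Q M) {ℓ : ℕ} : (Fin ℓ → Q) → (Fin ℓ → Q) → Prop :=
  Relation.ReflTransGen (StepNB P)

lemma lineAdj {ℓ : ℕ} (i j : Fin ℓ) :
    (lineGraph ℓ).Adj i j ↔ ((i : ℕ) + 1 = (j : ℕ) ∨ (j : ℕ) + 1 = (i : ℕ)) :=
  Iff.rfl

lemma stepNB_tau {ℓ : ℕ} (P : Protocol Q M) (L : Fin ℓ → Q) (v : Fin ℓ) (q : Q)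
    (h : (L v, Act.tau, q) ∈ P.delta) :
    StepNB P L (Function.update L v q) := by
  refine ⟨v, (L v, Act.tau, q), ⟨h, rfl, Function.update_self .., ?_⟩, ?_⟩
  · intro u hu; exact Function.update_of_ne hu _ _
  · rintro ⟨m, hm⟩; cases hm

lemma stepNB_brd {k : ℕ} (P : Protocol Q M) (L : Fin (k+2) → Q) (m : M) (a b : Q)
    (hb : (L 1, Act.brd m, b) ∈ P.delta)
    (h0 : (L 0, Act.rcv m, a) ∈ P.delta ∨ (¬ canRecv P (L 0) m ∧ a = L 0)) :
    ∃ L' : Fin (k+2) → Q, StepNB P L L' ∧ L' 0 = a ∧ L' 1 = b := by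
  classical
  set L' : Fin (k+2) → Q := fun u =>
    if (u : ℕ) = 0 then a else if (u : ℕ) = 1 then b
    else if (u : ℕ) = 2 then recvUpd P m (L u) else L u with hL'
  have hv1 : ((1 : Fin (k+2)) : ℕ) = 1 := by simp
  have hL'0 : L' 0 = a := by simp [hL']
  have hL'1 : L' 1 = b := by simp [hL', hv1]
  refine ⟨L', ⟨1, (L 1, Act.brd m, b), ⟨hb, rfl, hL'1, ?_, ?_⟩, ?_⟩, hL'0, hL'1⟩
  · intro u hadj
    rw [lineAdj] at hadj
    rcases eq_or_ne (u : ℕ) 0 with h | h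
    · have : u = 0 := by ext; simpa using h
      subst this
      rw [hL'0]
      exact h0
    · have h2 : (u : ℕ) = 2 := by omega
      have hu0 : u ≠ 0 := fun hc => h (by simp [hc])
      have : L' u = recvUpd P m (L u) := by simp [hL', h, h2, hu0]
      rw [this]
      exact recvUpd_spec P m (L u)
  · intro u hu hadj
    rw [lineAdj] at hadj
    have h1 : (u : ℕ) ≠ 1 := fun hc => hu (by ext; simpa using hc)
    have h0' : (u : ℕ) ≠ 0 := by omega
    have h2 : (u : ℕ) ≠ 2 := by omega
    have hu0 : u ≠ 0 := fun hc => h0' (by simp [hc])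
    simp [hL', h0', h1, h2, hu0]
  · intro _
    simp

/-- Prepend a fresh vertex labelled `qin` on the left. -/
def extL (P : Protocol Q M) {k : ℕ} (L : Fin (k+2) → Q) : Fin (k+3) → Q :=
  Fin.cases P.qin L

lemma stepNB_ext {k : ℕ} (P : Protocol Q M) {L L' : Fin (k+2) → Q}
    (h : StepNB P L L') : StepNB P (extL P L) (extL P L') := by
  obtain ⟨v, ⟨q, α, p⟩, ⟨ht, h1, h2, h3⟩, hnb⟩ := h
  refine ⟨v.succ, (q, α, p), ⟨ht, by simpa [extL] using h1,
    by simpa [extL] using h2, ?_⟩, ?_⟩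
  · cases α with
    | tau =>
      intro u hu
      cases u using Fin.cases with
      | zero => simp [extL]
      | succ i =>
        have hi : i ≠ v := fun hc => hu (by rw [hc])
        simpa [extL] using h3 i hi
    | rcv m => exact h3
    | brd m =>
      obtain ⟨Hadj, Hnon⟩ := h3
      have hv0 : (v : ℕ) ≠ 0 := hnb ⟨m, rfl⟩
      constructor
      · intro u hadj
        rw [lineAdj] at hadj
        cases u using Fin.cases with
        | zero => exfalso; simp only [Fin.val_succ, Fin.val_zero] at hadj; omega
        | succ i =>
          have : (lineGraph (k+2)).Adj v i := by
            rw [lineAdj]; simp [Fin.val_succ] at hadj; omega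
          simpa [extL] using Hadj i this
      · intro u hu hadj
        rw [lineAdj] at hadj
        cases u using Fin.cases with
        | zero => simp [extL]
        | succ i =>
          have hi : i ≠ v := fun hc => hu (by rw [hc])
          have : ¬ (lineGraph (k+2)).Adj v i := by
            rw [lineAdj]; simp [Fin.val_succ] at hadj; omega
          simpa [extL] using Hnon i hi this
  · intro _
    simp [Fin.val_succ]

lemma extL_init (P : Protocol Q M) (k : ℕ) :
    extL P (initConf P : Fin (k+2) → Q) = (initConf P : Fin (k+3) → Q) := by
  funext u
  cases u using Fin.cases <;> simp [extL, initConf]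

lemma realizableNB (P : Protocol Q M) :
    ∀ n q₁ q₂, (q₁, q₂) ∈ Siter P n →
    ∃ (k : ℕ) (L : Fin (k+2) → Q),
      ReachNB P (initConf P) L ∧ L 0 = q₁ ∧ L 1 = q₂ := by
  intro n
  induction n with
  | zero =>
    intro q₁ q₂ h
    simp only [Siter, Set.mem_singleton_iff, Prod.mk.injEq] at h
    exact ⟨0, initConf P, Relation.ReflTransGen.refl,
      by simp [initConf, h.1], by simp [initConf, h.2]⟩
  | succ n ih =>
    intro q₁ q₂ h
    simp only [Siter, pairStep, Set.mem_union, Set.mem_setOf_eq] at h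
    rcases h with ((((h | h) | h) | h) | h) | h
    · exact ih _ _ h
    · obtain ⟨p₁, hS, ht⟩ := h
      obtain ⟨k, L, hr, h0, h1⟩ := ih _ _ hS
      have one_ne : (1 : Fin (k+2)) ≠ 0 := by simp [Fin.ext_iff]
      refine ⟨k, Function.update L 0 q₁,
        hr.tail (stepNB_tau P L 0 q₁ (by rw [h0]; exact ht)), by simp, ?_⟩
      rw [Function.update_of_ne one_ne, h1]
    · obtain ⟨p₂, hS, ht⟩ := h
      obtain ⟨k, L, hr, h0, h1⟩ := ih _ _ hS
      have one_ne : (1 : Fin (k+2)) ≠ 0 := by simp [Fin.ext_iff]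
      refine ⟨k, Function.update L 1 q₂,
        hr.tail (stepNB_tau P L 1 q₂ (by rw [h1]; exact ht)), ?_, by simp⟩
      rw [Function.update_of_ne one_ne.symm, h0]
    · obtain ⟨p₁, p₂, m, hS, hb, hrc⟩ := h
      obtain ⟨k, L, hr, h0, h1⟩ := ih _ _ hS
      obtain ⟨L', hst, hL0, hL1⟩ :=
        stepNB_brd P L m q₁ q₂ (by rw [h1]; exact hb) (Or.inl (by rw [h0]; exact hrc))
      exact ⟨k, L', hr.tail hst, hL0, hL1⟩
    · obtain ⟨p₂, m, hS, hb, hnc⟩ := h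
      obtain ⟨k, L, hr, h0, h1⟩ := ih _ _ hS
      obtain ⟨L', hst, hL0, hL1⟩ :=
        stepNB_brd P L m q₁ q₂ (by rw [h1]; exact hb)
          (Or.inr ⟨by rw [h0]; exact hnc, h0.symm⟩)
      exact ⟨k, L', hr.tail hst, hL0, hL1⟩
    · obtain ⟨hq1, q', hS⟩ := h
      obtain ⟨k, L, hr, h0, h1⟩ := ih _ _ hS
      refine ⟨k + 1, extL P L, ?_, by simp [extL, hq1], ?_⟩
      · have := Relation.ReflTransGen.lift (extL P) (fun a b hab => stepNB_ext P hab) _ _ hr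
        rwa [Function.onFun, extL_init] at this
      · have : (1 : Fin (k+3)) = (0 : Fin (k+2)).succ := by ext; simp
        rw [this]
        simp only [extL, Fin.cases_succ]; exact h0

end Realizable


/-- every pair in the fixpoint `S` is realizable at the two leftmost
vertices of some line topology. -/
theorem pair_fixpoint_realizable {Q M : Type} (P : Protocol Q M) (q₁ q₂ : Q)
    (h : (q₁, q₂) ∈ ⋃ n, Siter P n) :
    ∃ (k : ℕ) (L : Fin (k+2) → Q),
      Reach (lineGraph (k+2)) P (initConf P) L ∧ L 0 = q₁ ∧ L 1 = q₂ := by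
  rw [Set.mem_iUnion] at h
  obtain ⟨n, hn⟩ := h
  obtain ⟨k, L, hr, h0, h1⟩ := realizableNB P n q₁ q₂ hn
  exact ⟨k, L, Relation.ReflTransGen.mono (fun a b ⟨v, t, hs, _⟩ => ⟨v, t, hs⟩) _ _ hr, h0, h1⟩

end BN
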